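/- Let (R; ·, ⁺) be a restriction semigroup and m : R → R a unary operation. Then every σ-class of R contains a maximum element with respect to the natural partial order and m(a) is the maximum element of the σ-class of a for every a ∈ R, if and only if the following two conditions hold: (M1) m(a) ≥ a for all a ∈ R; (M2) m(a) = m(ea) for all a ∈ R and all projections e ∈ R. -/
import Mathlib


/-- `e` is a projection: an element of the form `a⁺`. -/
def IsProjection {R : Type*} (plus : R → R) (e : R) : Prop := ∃ a, e = plus a

/-- The natural partial order: `s ≤ t` iff `s = s⁺·t`. -/
def NatLe {R : Type*} (mul : R → R → R) (plus : R → R) (s t : R) : Prop :=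
  s = mul (plus s) t

/-- The relation σ: `s σ t` iff `e·s = e·t` for some projection `e`. -/
def SigmaRel {R : Type*} (mul : R → R → R) (plus : R → R) (s t : R) : Prop :=
  ∃ e, IsProjection plus e ∧ mul e s = mul e t

section Aux

variable {R : Type*} [Semigroup R] (plus : R → R)

lemma proj_idem (h1 : ∀ x : R, plus x * x = x)
    (h3 : ∀ x y : R, plus (plus x * y) = plus x * plus y) (x : R) :
    plus x * plus x = plus x := by
  rw [← h3, h1]

lemma swap3 (h2 : ∀ x y : R, plus x * plus y = plus y * plus x) (x y : R) :
    plus x * plus y * plus x = plus x * plus x * plus y := by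
  rw [mul_assoc, h2 y x, ← mul_assoc]

lemma natle_antisymm (h1 : ∀ x : R, plus x * x = x)
    (h2 : ∀ x y : R, plus x * plus y = plus y * plus x)
    {s t : R} (hst : s = plus s * t) (hts : t = plus t * s) : s = t :=
  calc s = plus s * t := hst
    _ = plus s * (plus t * s) := by rw [← hts]
    _ = plus s * plus t * s := (mul_assoc _ _ _).symm
    _ = plus t * plus s * s := by rw [h2]
    _ = plus t * (plus s * s) := mul_assoc _ _ _
    _ = plus t * s := by rw [h1]
    _ = t := hts.symm

end Aux

/-- For a restriction semigroup `(R; ·, ⁺)` and a unary operation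
`m : R → R`: every σ-class has a maximum element and `m a` is the maximum of the
σ-class of `a` for every `a`, iff (M1) `m a ≥ a` for all `a` and
(M2) `m a = m (e·a)` for all `a` and all projections `e`. -/
theorem stmt_5 {R : Type*} [Semigroup R] (plus : R → R) (m : R → R)
    (h1 : ∀ x : R, plus x * x = x)
    (h2 : ∀ x y : R, plus x * plus y = plus y * plus x)
    (h3 : ∀ x y : R, plus (plus x * y) = plus x * plus y)
    (h4 : ∀ x y : R, x * plus y = plus (x * y) * x) :
    (∀ a : R, SigmaRel (· * ·) plus (m a) a ∧
      ∀ t, SigmaRel (· * ·) plus t a → NatLe (· * ·) plus t (m a)) ↔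
    ((∀ a : R, NatLe (· * ·) plus a (m a)) ∧
      (∀ (a e : R), IsProjection plus e → m a = m (e * a))) := by
  constructor
  · intro H
    constructor
    · intro a
      exact (H a).2 a ⟨plus a, ⟨a, rfl⟩, rfl⟩
    · rintro a e ⟨x, rfl⟩
      -- m (plus x * a) ≤ m a
      obtain ⟨f, ⟨y, rfl⟩, hf⟩ := (H (plus x * a)).1
      replace hf : plus y * m (plus x * a) = plus y * (plus x * a) := hf
      have hA : SigmaRel (· * ·) plus (m (plus x * a)) a := by
        refine ⟨plus x * plus y, ⟨plus x * y, (h3 x y).symm⟩, ?_⟩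
        show plus x * plus y * m (plus x * a) = plus x * plus y * a
        calc plus x * plus y * m (plus x * a)
            = plus x * (plus y * m (plus x * a)) := mul_assoc _ _ _
          _ = plus x * (plus y * (plus x * a)) := by rw [hf]
          _ = plus x * plus y * plus x * a := by simp only [mul_assoc]
          _ = plus x * plus x * plus y * a := by rw [swap3 plus h2]
          _ = plus x * plus y * a := by rw [proj_idem plus h1 h3]
      have hle1 : NatLe (· * ·) plus (m (plus x * a)) (m a) := (H a).2 _ hA
      -- m a ≤ m (plus x * a)
      obtain ⟨g, ⟨w, rfl⟩, hw⟩ := (H a).1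
      replace hw : plus w * m a = plus w * a := hw
      have hB : SigmaRel (· * ·) plus (m a) (plus x * a) := by
        refine ⟨plus x * plus w, ⟨plus x * w, (h3 x w).symm⟩, ?_⟩
        show plus x * plus w * m a = plus x * plus w * (plus x * a)
        calc plus x * plus w * m a
            = plus x * (plus w * m a) := mul_assoc _ _ _
          _ = plus x * (plus w * a) := by rw [hw]
          _ = plus x * plus x * (plus w * a) := by rw [proj_idem plus h1 h3]
          _ = plus x * plus x * plus w * a := by simp only [mul_assoc]
          _ = plus x * plus w * plus x * a := by rw [← swap3 plus h2]
          _ = plus x * plus w * (plus x * a) := mul_assoc _ _ _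
      have hle2 : NatLe (· * ·) plus (m a) (m (plus x * a)) :=
        (H (plus x * a)).2 _ hB
      exact natle_antisymm plus h1 h2 hle2 hle1
  · rintro ⟨hM1, hM2⟩ a
    constructor
    · refine ⟨plus a, ⟨a, rfl⟩, ?_⟩
      show plus a * m a = plus a * a
      rw [h1]
      exact (hM1 a).symm
    · rintro t ⟨e, he, het⟩
      have hmt : m t = m a := by
        rw [hM2 t e he, hM2 a e he]
        exact congrArg m het
      have := hM1 t
      rwa [hmt] at this
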